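/- Let X be a random vector in ℝⁿ, M an independent standard Gaussian, σ > 0, and f the density of X + σM. Then there exist constants a, b > 0 (depending only on n and σ) such that |∂ᵢf(x)| ≤ f(x) · a · (1 + |log(b f(x))|^{1/2}) for every x ∈ ℝⁿ and every coordinate direction i. -/

import Mathlib

open MeasureTheory Real

set_option synthInstance.maxHeartbeats 1000000
set_option maxHeartbeats 1000000

private lemma aux_mul_exp_le (σ c t : ℝ) (hσ : 0 < σ) (hc : 1 ≤ c) (ht : 0 ≤ t) :
    t * Real.exp (-t ^ 2 / (c * σ ^ 2)) ≤ c * σ := by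
  have hc0 : 0 < c := lt_of_lt_of_le one_pos hc
  rcases le_or_gt t (c * σ) with h | h
  · have h0 : -t ^ 2 / (c * σ ^ 2) ≤ 0 :=
      div_nonpos_of_nonpos_of_nonneg (neg_nonpos.mpr (sq_nonneg t)) (by positivity)
    have h1 : Real.exp (-t ^ 2 / (c * σ ^ 2)) ≤ 1 := Real.exp_le_one_iff.mpr h0
    nlinarith
  · have ht0 : 0 < t := lt_trans (by positivity) h
    have hu : 0 < t ^ 2 / (c * σ ^ 2) := div_pos (by positivity) (by positivity)
    have h2 : t ^ 2 / (c * σ ^ 2) ≤ Real.exp (t ^ 2 / (c * σ ^ 2)) := by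
      linarith [Real.add_one_le_exp (t ^ 2 / (c * σ ^ 2))]
    have h3 : Real.exp (-t ^ 2 / (c * σ ^ 2)) ≤ c * σ ^ 2 / t ^ 2 := by
      rw [neg_div, Real.exp_neg]
      calc (Real.exp (t ^ 2 / (c * σ ^ 2)))⁻¹ ≤ (t ^ 2 / (c * σ ^ 2))⁻¹ :=
            inv_anti₀ hu h2
        _ = c * σ ^ 2 / t ^ 2 := by rw [inv_div]
    have h4 : t * Real.exp (-t ^ 2 / (c * σ ^ 2)) ≤ c * σ ^ 2 / t := by
      calc t * Real.exp (-t ^ 2 / (c * σ ^ 2)) ≤ t * (c * σ ^ 2 / t ^ 2) := by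
            exact mul_le_mul_of_nonneg_left h3 ht
        _ = c * σ ^ 2 / t := by field_simp
    have h5 : c * σ ^ 2 / t ≤ σ := by
      rw [div_le_iff₀ ht0]
      nlinarith
    nlinarith

private lemma aux_pt (σ K R t : ℝ) (hσ : 0 < σ) (hK : 0 < K) (hR : 0 ≤ R) (ht : 0 ≤ t) :
    1 / σ ^ 2 * (t * (K * Real.exp (-t ^ 2 / (2 * σ ^ 2)))) ≤
      R / σ ^ 2 * (K * Real.exp (-t ^ 2 / (2 * σ ^ 2))) +
        4 * K / σ * Real.exp (-R ^ 2 / (4 * σ ^ 2)) := by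
  rcases le_or_gt t R with h | h
  · have h1 : 1 / σ ^ 2 * (t * (K * Real.exp (-t ^ 2 / (2 * σ ^ 2)))) ≤
        R / σ ^ 2 * (K * Real.exp (-t ^ 2 / (2 * σ ^ 2))) := by
      calc 1 / σ ^ 2 * (t * (K * Real.exp (-t ^ 2 / (2 * σ ^ 2))))
          = t * (K * Real.exp (-t ^ 2 / (2 * σ ^ 2)) / σ ^ 2) := by ring
        _ ≤ R * (K * Real.exp (-t ^ 2 / (2 * σ ^ 2)) / σ ^ 2) :=
            mul_le_mul_of_nonneg_right h (by positivity)
        _ = R / σ ^ 2 * (K * Real.exp (-t ^ 2 / (2 * σ ^ 2))) := by ring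
    have h2 : (0:ℝ) ≤ 4 * K / σ * Real.exp (-R ^ 2 / (4 * σ ^ 2)) := by positivity
    linarith
  · have hsplit : Real.exp (-t ^ 2 / (2 * σ ^ 2)) =
        Real.exp (-t ^ 2 / (4 * σ ^ 2)) * Real.exp (-t ^ 2 / (4 * σ ^ 2)) := by
      rw [← Real.exp_add]; congr 1; field_simp; ring
    have h1 : t * Real.exp (-t ^ 2 / (4 * σ ^ 2)) ≤ 4 * σ :=
      aux_mul_exp_le σ 4 t hσ (by norm_num) ht
    have h2 : Real.exp (-t ^ 2 / (4 * σ ^ 2)) ≤ Real.exp (-R ^ 2 / (4 * σ ^ 2)) := by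
      apply Real.exp_le_exp.mpr
      have : R ^ 2 ≤ t ^ 2 := by nlinarith
      have h4 : (0:ℝ) < 4 * σ ^ 2 := by positivity
      rw [div_le_div_iff₀ h4 h4]
      nlinarith
    have hmain : 1 / σ ^ 2 * (t * (K * Real.exp (-t ^ 2 / (2 * σ ^ 2)))) ≤
        4 * K / σ * Real.exp (-R ^ 2 / (4 * σ ^ 2)) := by
      rw [hsplit]
      have he1 : (0:ℝ) ≤ Real.exp (-t ^ 2 / (4 * σ ^ 2)) := (Real.exp_pos _).le
      have he2 : (0:ℝ) ≤ Real.exp (-R ^ 2 / (4 * σ ^ 2)) := (Real.exp_pos _).le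
      have key : t * Real.exp (-t ^ 2 / (4 * σ ^ 2)) * Real.exp (-t ^ 2 / (4 * σ ^ 2))
          ≤ 4 * σ * Real.exp (-R ^ 2 / (4 * σ ^ 2)) := by
        calc t * Real.exp (-t ^ 2 / (4 * σ ^ 2)) * Real.exp (-t ^ 2 / (4 * σ ^ 2))
            ≤ (4 * σ) * Real.exp (-t ^ 2 / (4 * σ ^ 2)) :=
              mul_le_mul_of_nonneg_right h1 he1
          _ ≤ (4 * σ) * Real.exp (-R ^ 2 / (4 * σ ^ 2)) := by
              apply mul_le_mul_of_nonneg_left h2 (by positivity)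
      have hσ2 : (0:ℝ) < σ ^ 2 := by positivity
      rw [div_mul_eq_mul_div, one_mul, div_mul_eq_mul_div,
        div_le_div_iff₀ hσ2 (by positivity : (0:ℝ) < σ)]
      nlinarith [mul_le_mul_of_nonneg_left key hK.le]
    have h3 : (0:ℝ) ≤ R / σ ^ 2 * (K * Real.exp (-t ^ 2 / (2 * σ ^ 2))) := by positivity
    linarith

private lemma aux_hasFDerivAt {n : ℕ} (σ K : ℝ) (z x : EuclideanSpace ℝ (Fin n)) :
    HasFDerivAt (fun x : EuclideanSpace ℝ (Fin n) => K * Real.exp (-‖x - z‖ ^ 2 / (2 * σ ^ 2)))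
      ((-(1 / σ ^ 2) * (K * Real.exp (-‖x - z‖ ^ 2 / (2 * σ ^ 2)))) • (innerSL ℝ (x - z))) x := by
  have hs : HasFDerivAt (fun x : EuclideanSpace ℝ (Fin n) => x - z)
      (ContinuousLinearMap.id ℝ (EuclideanSpace ℝ (Fin n))) x := (hasFDerivAt_id x).sub_const z
  have h1 : HasFDerivAt (fun x : EuclideanSpace ℝ (Fin n) => ‖x - z‖ ^ 2)
      (2 • (innerSL ℝ (x - z))) x := by
    simpa using hs.norm_sq
  have h2 : HasDerivAt (fun u : ℝ => K * Real.exp (-u / (2 * σ ^ 2)))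
      (K * (Real.exp (-‖x - z‖ ^ 2 / (2 * σ ^ 2)) * (-1 / (2 * σ ^ 2)))) (‖x - z‖ ^ 2) := by
    have hlin : HasDerivAt (fun u : ℝ => -u / (2 * σ ^ 2)) (-1 / (2 * σ ^ 2)) (‖x - z‖ ^ 2) := by
      simpa using ((hasDerivAt_id (‖x - z‖ ^ 2)).neg.div_const (2 * σ ^ 2))
    exact (hlin.exp).const_mul K
  have h3 := h2.comp_hasFDerivAt x h1
  refine h3.congr_fderiv ?_
  ext y
  simp [two_smul, ContinuousLinearMap.smul_apply, smul_eq_mul]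
  ring

private lemma aux_norm_Fd {n : ℕ} (σ K : ℝ) (hσ : 0 < σ) (hK : 0 < K)
    (y z : EuclideanSpace ℝ (Fin n)) :
    ‖(-(1 / σ ^ 2) * (K * Real.exp (-‖y - z‖ ^ 2 / (2 * σ ^ 2)))) • (innerSL ℝ (y - z))‖ =
      1 / σ ^ 2 * (‖y - z‖ * (K * Real.exp (-‖y - z‖ ^ 2 / (2 * σ ^ 2)))) := by
  rw [norm_smul (-(1 / σ ^ 2) * (K * Real.exp (-‖y - z‖ ^ 2 / (2 * σ ^ 2)))) (innerSL ℝ (y - z)),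
    Real.norm_eq_abs, innerSL_apply_norm, abs_mul, abs_neg,
    abs_of_pos (by positivity : (0:ℝ) < 1 / σ ^ 2),
    abs_of_pos (by positivity : (0:ℝ) < K * Real.exp (-‖y - z‖ ^ 2 / (2 * σ ^ 2)))]
  ring

/-- Gradient bound for the Gaussian-smoothed density `f` of `X + σM`:
there are constants `a, b > 0` (depending only on `n` and `σ`) such that
`|∂ᵢ f(x)| ≤ f(x) · a · (1 + |log(b f(x))|^{1/2})` for every `x` and coordinate `i`. -/
theorem heated_density_gradient_bound
    {n : ℕ} (μ : Measure (EuclideanSpace ℝ (Fin n))) [IsProbabilityMeasure μ]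
    (σ : ℝ) (hσ : 0 < σ)
    (f : EuclideanSpace ℝ (Fin n) → ℝ)
    (hf : ∀ x, f x = ∫ z, (2 * π * σ ^ 2) ^ (-(n : ℝ) / 2) *
      exp (-‖x - z‖ ^ 2 / (2 * σ ^ 2)) ∂μ) :
    ∃ a > 0, ∃ b > 0, ∀ (x : EuclideanSpace ℝ (Fin n)) (i : Fin n),
      |fderiv ℝ f x (EuclideanSpace.single i 1)| ≤
        f x * a * (1 + Real.sqrt |log (b * f x)|) := by
  set K : ℝ := (2 * π * σ ^ 2) ^ (-(n : ℝ) / 2) with hKdef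
  have hK : 0 < K := Real.rpow_pos_of_pos (by positivity) _
  -- continuity of the integrand in z (for fixed x)
  have hcont : ∀ x : EuclideanSpace ℝ (Fin n),
      Continuous (fun z : EuclideanSpace ℝ (Fin n) =>
        K * Real.exp (-‖x - z‖ ^ 2 / (2 * σ ^ 2))) := by
    intro x; fun_prop
  have hle : ∀ (x z : EuclideanSpace ℝ (Fin n)),
      K * Real.exp (-‖x - z‖ ^ 2 / (2 * σ ^ 2)) ≤ K := by
    intro x z
    have h0 : -‖x - z‖ ^ 2 / (2 * σ ^ 2) ≤ 0 :=
      div_nonpos_of_nonpos_of_nonneg (neg_nonpos.mpr (sq_nonneg _)) (by positivity)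
    nlinarith [Real.exp_le_one_iff.mpr h0, Real.exp_pos (-‖x - z‖ ^ 2 / (2 * σ ^ 2))]
  have hint : ∀ x : EuclideanSpace ℝ (Fin n),
      Integrable (fun z => K * Real.exp (-‖x - z‖ ^ 2 / (2 * σ ^ 2))) μ := by
    intro x
    refine Integrable.mono' (integrable_const K) ((hcont x).aestronglyMeasurable) ?_
    filter_upwards with z
    rw [Real.norm_eq_abs, abs_of_pos (by positivity)]
    exact hle x z
  have hfpos : ∀ x, 0 < f x := by
    intro x
    rw [hf x]
    refine (integral_pos_iff_support_of_nonneg (fun z => by positivity) (hint x)).mpr ?_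
    have hsupp : Function.support (fun z : EuclideanSpace ℝ (Fin n) =>
        K * Real.exp (-‖x - z‖ ^ 2 / (2 * σ ^ 2))) = Set.univ := by
      ext z
      simp only [Function.mem_support, Set.mem_univ, iff_true]
      exact ne_of_gt (by positivity)
    rw [hsupp, measure_univ]
    norm_num
  have hfleK : ∀ x, f x ≤ K := by
    intro x
    rw [hf x]
    calc ∫ z, K * Real.exp (-‖x - z‖ ^ 2 / (2 * σ ^ 2)) ∂μ ≤ ∫ _z, K ∂μ :=
          integral_mono (hint x) (integrable_const K) (fun z => hle x z)
      _ = K := by simp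
  refine ⟨4 / σ, by positivity, K⁻¹, by positivity, ?_⟩
  intro x i
  -- the derivative field
  set Fd : EuclideanSpace ℝ (Fin n) → EuclideanSpace ℝ (Fin n) →
      (EuclideanSpace ℝ (Fin n) →L[ℝ] ℝ) := fun y z =>
    (-(1 / σ ^ 2) * (K * Real.exp (-‖y - z‖ ^ 2 / (2 * σ ^ 2)))) • (innerSL ℝ (y - z)) with hFd
  have hFdcont : ∀ y : EuclideanSpace ℝ (Fin n), Continuous (Fd y) := by
    intro y
    refine Continuous.smul (f := fun z => -(1 / σ ^ 2) * (K * Real.exp (-‖y - z‖ ^ 2 / (2 * σ ^ 2))))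
      (g := fun z => innerSL ℝ (y - z)) ?_ ?_
    · fun_prop
    · exact (innerSL ℝ).continuous.comp (continuous_const.sub continuous_id)
  have hFdnorm : ∀ y z : EuclideanSpace ℝ (Fin n), ‖Fd y z‖ ≤ 2 * K / σ := by
    intro y z
    rw [hFd]
    rw [aux_norm_Fd σ K hσ hK y z]
    have h1 : ‖y - z‖ * Real.exp (-‖y - z‖ ^ 2 / (2 * σ ^ 2)) ≤ 2 * σ :=
      aux_mul_exp_le σ 2 ‖y - z‖ hσ (by norm_num) (norm_nonneg _)
    calc 1 / σ ^ 2 * (‖y - z‖ * (K * Real.exp (-‖y - z‖ ^ 2 / (2 * σ ^ 2))))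
        = K / σ ^ 2 * (‖y - z‖ * Real.exp (-‖y - z‖ ^ 2 / (2 * σ ^ 2))) := by ring
      _ ≤ K / σ ^ 2 * (2 * σ) := mul_le_mul_of_nonneg_left h1 (by positivity)
      _ = 2 * K / σ := by field_simp
  have hFdint : Integrable (Fd x) μ := by
    refine Integrable.mono' (integrable_const (2 * K / σ)) ((hFdcont x).aestronglyMeasurable) ?_
    filter_upwards with z
    exact hFdnorm x z
  -- differentiate under the integral sign
  have key : HasFDerivAt (fun y => ∫ z, K * Real.exp (-‖y - z‖ ^ 2 / (2 * σ ^ 2)) ∂μ)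
      (∫ z, Fd x z ∂μ) x := by
    refine hasFDerivAt_integral_of_dominated_of_fderiv_le (F' := Fd)
      (bound := fun _ => 2 * K / σ) Filter.univ_mem ?_ (hint x) ?_ ?_ (integrable_const _) ?_
    · exact Filter.Eventually.of_forall fun y => ((hcont y).aestronglyMeasurable)
    · exact (hFdcont x).aestronglyMeasurable
    · filter_upwards with z y _ using hFdnorm y z
    · filter_upwards with z y _ using aux_hasFDerivAt σ K z y
  have hder : HasFDerivAt f (∫ z, Fd x z ∂μ) x := by
    have hfeq : f = fun y => ∫ z, K * Real.exp (-‖y - z‖ ^ 2 / (2 * σ ^ 2)) ∂μ := funext hf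
    rw [hfeq]
    exact key
  rw [hder.fderiv]
  rw [ContinuousLinearMap.integral_apply hFdint]
  -- constants for the splitting
  set L : ℝ := Real.log (K / f x) with hLdef
  have hL0 : 0 ≤ L := Real.log_nonneg ((one_le_div (hfpos x)).mpr (hfleK x))
  set R : ℝ := 2 * σ * Real.sqrt L with hRdef
  have hR0 : 0 ≤ R := by positivity
  have hRsq : R ^ 2 = 4 * σ ^ 2 * L := by
    rw [hRdef, mul_pow, mul_pow, Real.sq_sqrt hL0]; ring
  have hexpR : Real.exp (-R ^ 2 / (4 * σ ^ 2)) = f x / K := by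
    have : -R ^ 2 / (4 * σ ^ 2) = -L := by rw [hRsq]; field_simp
    rw [this, Real.exp_neg, hLdef, Real.exp_log (div_pos hK (hfpos x)), inv_div]
  -- pointwise bound of the integrand
  have hptwise : ∀ z, |Fd x z (EuclideanSpace.single i 1)| ≤
      R / σ ^ 2 * (K * Real.exp (-‖x - z‖ ^ 2 / (2 * σ ^ 2))) +
        4 * K / σ * Real.exp (-R ^ 2 / (4 * σ ^ 2)) := by
    intro z
    have h1 : |Fd x z (EuclideanSpace.single i 1)| ≤
        1 / σ ^ 2 * (‖x - z‖ * (K * Real.exp (-‖x - z‖ ^ 2 / (2 * σ ^ 2)))) := by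
      have h2 : ‖Fd x z (EuclideanSpace.single i 1)‖ ≤
          ‖Fd x z‖ * ‖(EuclideanSpace.single i (1:ℝ))‖ :=
        (Fd x z).le_opNorm _
      rw [Real.norm_eq_abs] at h2
      rw [EuclideanSpace.norm_single, norm_one, mul_one] at h2
      rw [hFd] at h2
      rw [aux_norm_Fd σ K hσ hK x z] at h2
      exact h2
    exact h1.trans (aux_pt σ K R ‖x - z‖ hσ hK hR0 (norm_nonneg _))
  -- integrate the pointwise bound
  have hbnd : |∫ z, Fd x z (EuclideanSpace.single i 1) ∂μ| ≤
      R / σ ^ 2 * f x + 4 * K / σ * Real.exp (-R ^ 2 / (4 * σ ^ 2)) := by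
    have hgint : Integrable (fun z =>
        R / σ ^ 2 * (K * Real.exp (-‖x - z‖ ^ 2 / (2 * σ ^ 2))) +
          4 * K / σ * Real.exp (-R ^ 2 / (4 * σ ^ 2))) μ :=
      ((hint x).const_mul _).add (integrable_const _)
    calc |∫ z, Fd x z (EuclideanSpace.single i 1) ∂μ|
        ≤ ∫ z, |Fd x z (EuclideanSpace.single i 1)| ∂μ := by
          simpa [Real.norm_eq_abs] using
            norm_integral_le_integral_norm (μ := μ) (fun z => Fd x z (EuclideanSpace.single i 1))
      _ ≤ ∫ z, (R / σ ^ 2 * (K * Real.exp (-‖x - z‖ ^ 2 / (2 * σ ^ 2))) +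
            4 * K / σ * Real.exp (-R ^ 2 / (4 * σ ^ 2))) ∂μ := by
          refine integral_mono_of_nonneg ?_ hgint ?_
          · filter_upwards with z using abs_nonneg _
          · filter_upwards with z using hptwise z
      _ = R / σ ^ 2 * f x + 4 * K / σ * Real.exp (-R ^ 2 / (4 * σ ^ 2)) := by
          rw [integral_add ((hint x).const_mul _) (integrable_const _),
            integral_const_mul, integral_const, ← hf x]
          simp
  -- identify the logarithm
  have hlog : |Real.log (K⁻¹ * f x)| = L := by
    have h1 : K⁻¹ * f x = f x / K := by ring
    have hL' : L = Real.log K - Real.log (f x) :=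
      Real.log_div (ne_of_gt hK) (ne_of_gt (hfpos x))
    rw [h1, Real.log_div (ne_of_gt (hfpos x)) (ne_of_gt hK),
      show Real.log (f x) - Real.log K = -L by linarith, abs_neg, abs_of_nonneg hL0]
  rw [hlog]
  refine hbnd.trans ?_
  rw [hexpR]
  have hs0 : 0 ≤ Real.sqrt L := Real.sqrt_nonneg L
  have hfx : 0 < f x := hfpos x
  have hEq : R / σ ^ 2 * f x + 4 * K / σ * (f x / K) =
      f x * (2 * Real.sqrt L + 4) / σ := by
    rw [hRdef]; field_simp
  have hEq2 : f x * (4 / σ) * (1 + Real.sqrt L) = f x * (4 * (1 + Real.sqrt L)) / σ := by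
    ring
  rw [hEq, hEq2]
  gcongr
  nlinarith [mul_nonneg hfx.le hs0]
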